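/- If a finite matroid M satisfies r(⋃F) ≥ Σ_{∅≠F'⊆F} (−1)^{|F'|+1} r(⋂F') for all families F of intersections of cyclic flats, then equality holds in this inequality for all such families F. -/

import Mathlib

open Matroid Set

variable {α : Type*}

/-- An element that lies in every base of `M`; a coloop. -/
def MCoPaper.Coloop (M : Matroid α) (e : α) : Prop := ∀ B, M.IsBase B → e ∈ B

/-- A circuit: a minimal dependent subset of the ground set. -/
def MCoPaper.Circuit (M : Matroid α) (C : Set α) : Prop :=
  C ⊆ M.E ∧ ¬ M.Indep C ∧ ∀ x ∈ C, M.Indep (C \ {x})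

/-- A cyclic flat: a flat whose restriction has no coloops. -/
def MCoPaper.CyclicFlat (M : Matroid α) (F : Set α) : Prop :=
  M.IsFlat F ∧ ∀ e ∈ F, ¬ MCoPaper.Coloop (M ↾ F) e

/-- The rank of a set: the largest cardinality of an independent subset. -/
noncomputable def MCoPaper.rk (M : Matroid α) (X : Set α) : ℕ :=
  sSup {n | ∃ I, M.Indep I ∧ I ⊆ X ∧ I.ncard = n}

open MCoPaper Classical in
/-- Mason's β function. -/
noncomputable def MCoPaper.beta [Fintype α] (M : Matroid α) (X : Finset α) : ℤ :=
  (rk M M.E : ℤ) - rk M ↑X -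
    ∑ Y ∈ (Finset.univ.filter (fun Y : Finset α => CyclicFlat M ↑Y ∧ X ⊂ Y)).attach,
      MCoPaper.beta M Y.1
  termination_by (Fintype.card α - X.card : ℕ)
  decreasing_by
    have hY := Y.2
    simp only [Finset.mem_filter, Finset.mem_univ, true_and] at hY
    have h1 : X.card < Y.1.card := Finset.card_lt_card hY.2
    have h2 : Y.1.card ≤ Fintype.card α := Y.1.card_le_univ
    omega

open MCoPaper Classical in
/-- Mason's α function. -/
noncomputable def MCoPaper.alpha [Fintype α] (M : Matroid α) (X : Finset α) : ℤ :=
  ((X.card : ℤ) - rk M ↑X) -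
    ∑ F ∈ (Finset.univ.filter (fun F : Finset α => M.IsFlat ↑F ∧ F ⊂ X)).attach,
      MCoPaper.alpha M F.1
  termination_by X.card
  decreasing_by
    have hF := F.2
    simp only [Finset.mem_filter, Finset.mem_univ, true_and] at hF
    exact Finset.card_lt_card hF.2

/-- `A : Fin n → Set α` is a presentation of `M`. -/
def MCoPaper.IsPresentation (M : Matroid α) {n : ℕ} (A : Fin n → Set α) : Prop :=
  (∀ i, A i ⊆ M.E) ∧
    ∀ I : Set α, M.Indep I ↔ ∃ φ : α → Fin n, Set.InjOn φ I ∧ ∀ x ∈ I, x ∈ A (φ x)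

/-- `M` is a transversal matroid. -/
def MCoPaper.Transversal (M : Matroid α) : Prop :=
  ∃ (n : ℕ) (A : Fin n → Set α), MCoPaper.IsPresentation M A

/-- `B` is a fundamental basis of `M`. -/
def MCoPaper.FundBasis (M : Matroid α) (B : Set α) : Prop :=
  M.IsBase B ∧ ∀ F, MCoPaper.CyclicFlat M F → F ⊆ M.closure (B ∩ F)

/-- `M` is a fundamental transversal matroid. -/
def MCoPaper.FundTransversal (M : Matroid α) : Prop :=
  ∃ B, MCoPaper.FundBasis M B

namespace MCoPaper

lemma le_rk [Fintype α] {M : Matroid α} {J X : Set α} (hJ : M.Indep J) (hJX : J ⊆ X) :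
    J.ncard ≤ rk M X := by
  apply le_csSup
  · refine ⟨Nat.card α, ?_⟩
    rintro n ⟨I, -, -, rfl⟩
    simpa [Set.ncard_univ] using Set.ncard_le_ncard (Set.subset_univ I) (Set.toFinite _)
  · exact ⟨J, hJ, hJX, rfl⟩

lemma rk_le {M : Matroid α} {X : Set α} {n : ℕ} (h : ∀ J, M.Indep J → J ⊆ X → J.ncard ≤ n) :
    rk M X ≤ n := by
  unfold rk
  refine csSup_le ⟨0, ∅, M.empty_indep, Set.empty_subset X, Set.ncard_empty α⟩ ?_
  rintro m ⟨I, h1, h2, rfl⟩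
  exact h I h1 h2

lemma rk_eq_of_basis' [Fintype α] {M : Matroid α} {I X : Set α} (hI : M.IsBasis' I X) :
    rk M X = I.ncard := by
  refine le_antisymm (rk_le fun J hJ hJX => ?_) (le_rk hI.indep hI.subset)
  obtain ⟨J', hJ', hJJ'⟩ := hJ.subset_isBasis'_of_subset hJX
  have h1 : J'.ncard = I.ncard := by
    rw [Set.ncard_def, Set.ncard_def, hJ'.encard_eq_encard hI]
  exact (Set.ncard_le_ncard hJJ' (Set.toFinite _)).trans h1.le

lemma rk_mono [Fintype α] {M : Matroid α} {X Y : Set α} (hXY : X ⊆ Y) : rk M X ≤ rk M Y :=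
  rk_le fun J hJ hJX => le_rk hJ (hJX.trans hXY)

lemma rk_submod [Fintype α] (M : Matroid α) (X Y : Set α) :
    rk M (X ∩ Y) + rk M (X ∪ Y) ≤ rk M X + rk M Y := by
  obtain ⟨I, hI⟩ := M.exists_isBasis' (X ∩ Y)
  obtain ⟨J, hJ, hIJ⟩ := hI.indep.subset_isBasis'_of_subset
    (hI.subset.trans Set.inter_subset_left |>.trans Set.subset_union_left)
  have hIeq : I = J ∩ (X ∩ Y) := by
    refine hI.eq_of_subset_indep (hJ.indep.subset Set.inter_subset_left)
      (Set.subset_inter hIJ hI.subset) Set.inter_subset_right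
  have h1 : rk M (X ∩ Y) = I.ncard := rk_eq_of_basis' hI
  have h2 : rk M (X ∪ Y) = J.ncard := rk_eq_of_basis' hJ
  have hXle : (J ∩ X).ncard ≤ rk M X :=
    le_rk (hJ.indep.subset Set.inter_subset_left) Set.inter_subset_right
  have hYle : (J ∩ Y).ncard ≤ rk M Y :=
    le_rk (hJ.indep.subset Set.inter_subset_left) Set.inter_subset_right
  have hint : (J ∩ X) ∩ (J ∩ Y) = I := by
    rw [hIeq]; ext x; simp; tauto
  have huni : (J ∩ X) ∪ (J ∩ Y) = J := by
    have := hJ.subset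
    ext x; simp only [Set.mem_union, Set.mem_inter_iff]
    constructor
    · tauto
    · intro hx; rcases this hx with h | h <;> tauto
  have hsum := Set.ncard_inter_add_ncard_union (J ∩ X) (J ∩ Y) (Set.toFinite _) (Set.toFinite _)
  rw [hint, huni] at hsum
  omega

open Classical in
lemma fiber_sum {β γ : Type*} [DecidableEq γ] (f : β → γ) (F : Finset β) :
    ∀ G' : Finset γ, G' ⊆ F.image f →
      ∑ F' ∈ F.powerset.filter (fun F' => F'.image f = G'), (-1 : ℤ) ^ F'.card
        = (-1) ^ G'.card := by
  intro G'
  induction G' using Finset.strongInduction with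
  | _ G' ih =>
    intro hG'
    have hset : F.powerset.filter (fun F' => F'.image f ⊆ G')
        = (F.filter (fun x => f x ∈ G')).powerset := by
      ext F'
      simp only [Finset.mem_filter, Finset.mem_powerset]
      constructor
      · rintro ⟨h1, h2⟩ x hx
        exact Finset.mem_filter.mpr ⟨h1 hx, Finset.image_subset_iff.mp h2 x hx⟩
      · intro h1
        refine ⟨by intro x hx; exact (Finset.mem_filter.mp (h1 hx)).1, ?_⟩
        exact Finset.image_subset_iff.mpr fun x hx => (Finset.mem_filter.mp (h1 hx)).2
    have hN : ∑ F' ∈ F.powerset.filter (fun F' => F'.image f ⊆ G'), (-1 : ℤ) ^ F'.card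
        = if G' = ∅ then 1 else 0 := by
      rw [hset, Finset.sum_powerset_neg_one_pow_card]
      by_cases hG : G' = ∅
      · simp [hG]
      · rw [if_neg hG, if_neg]
        obtain ⟨y, hy⟩ := Finset.nonempty_iff_ne_empty.mpr hG
        obtain ⟨x, hxF, rfl⟩ := Finset.mem_image.mp (hG' hy)
        intro hemp
        have hx : x ∈ F.filter (fun x => f x ∈ G') := Finset.mem_filter.mpr ⟨hxF, hy⟩
        rw [hemp] at hx
        exact absurd hx (Finset.notMem_empty x)
    have hmaps : ∀ F' ∈ F.powerset.filter (fun F' => F'.image f ⊆ G'),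
        F'.image f ∈ G'.powerset :=
      fun F' hF' => Finset.mem_powerset.mpr (Finset.mem_filter.mp hF').2
    have hpart := Finset.sum_fiberwise_of_maps_to hmaps (fun F' => (-1 : ℤ) ^ F'.card)
    have hfib : ∀ G'' ∈ G'.powerset,
        ∑ F' ∈ (F.powerset.filter (fun F' => F'.image f ⊆ G')).filter
            (fun F' => F'.image f = G''), (-1 : ℤ) ^ F'.card
          = ∑ F' ∈ F.powerset.filter (fun F' => F'.image f = G''), (-1 : ℤ) ^ F'.card := by
      intro G'' hG''
      congr 1
      rw [Finset.filter_filter]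
      apply Finset.filter_congr
      intro F' _
      constructor
      · rintro ⟨-, h⟩; exact h
      · intro h; exact ⟨h ▸ Finset.mem_powerset.mp hG'', h⟩
    have hN2 : ∑ G'' ∈ G'.powerset,
        ∑ F' ∈ F.powerset.filter (fun F' => F'.image f = G''), (-1 : ℤ) ^ F'.card
          = if G' = ∅ then 1 else 0 := by
      rw [← hN, ← hpart]
      exact Finset.sum_congr rfl (fun x hx => (hfib x hx).symm)
    have hmem := Finset.mem_powerset_self G'
    have e1 := Finset.sum_eq_sum_sdiff_singleton_add hmem
      (fun G'' => ∑ F' ∈ F.powerset.filter (fun F' => F'.image f = G''), (-1 : ℤ) ^ F'.card)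
    have e2 := Finset.sum_eq_sum_sdiff_singleton_add hmem (fun G'' => (-1 : ℤ) ^ G''.card)
    have e3 : ∑ G'' ∈ G'.powerset \ {G'},
        (∑ F' ∈ F.powerset.filter (fun F' => F'.image f = G''), (-1 : ℤ) ^ F'.card)
          = ∑ G'' ∈ G'.powerset \ {G'}, (-1 : ℤ) ^ G''.card := by
      apply Finset.sum_congr rfl
      intro G'' hmem'
      rw [Finset.mem_sdiff, Finset.mem_singleton] at hmem'
      have hss : G'' ⊂ G' := (Finset.mem_powerset.mp hmem'.1).ssubset_of_ne hmem'.2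
      exact ih G'' hss (hss.subset.trans hG')
    have e4 : ∑ G'' ∈ G'.powerset, (-1 : ℤ) ^ G''.card = if G' = ∅ then 1 else 0 :=
      Finset.sum_powerset_neg_one_pow_card
    rw [hN2] at e1
    rw [e4] at e2
    rw [e3] at e1
    linarith

open Classical in
lemma collapse_sum {β γ : Type*} [DecidableEq γ] (f : β → γ) (F : Finset β) (g : Finset γ → ℤ) :
    ∑ F' ∈ F.powerset, (-1 : ℤ) ^ F'.card * g (F'.image f)
      = ∑ G' ∈ (F.image f).powerset, (-1 : ℤ) ^ G'.card * g G' := by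
  have hmaps : ∀ F' ∈ F.powerset, F'.image f ∈ (F.image f).powerset :=
    fun F' hF' => Finset.mem_powerset.mpr (Finset.image_subset_image (Finset.mem_powerset.mp hF'))
  rw [← Finset.sum_fiberwise_of_maps_to hmaps (fun F' => (-1 : ℤ) ^ F'.card * g (F'.image f))]
  apply Finset.sum_congr rfl
  intro G' hG'
  have : ∑ F' ∈ F.powerset.filter (fun F' => F'.image f = G'),
      (-1 : ℤ) ^ F'.card * g (F'.image f)
      = ∑ F' ∈ F.powerset.filter (fun F' => F'.image f = G'), (-1 : ℤ) ^ F'.card * g G' := by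
    apply Finset.sum_congr rfl
    intro F' hF'
    rw [(Finset.mem_filter.mp hF').2]
  rw [this, ← Finset.sum_mul, fiber_sum f F G' (Finset.mem_powerset.mp hG')]

open Classical in
lemma split_empty {β : Type*} (s : Finset β) (f : Finset β → ℤ) :
    ∑ t ∈ s.powerset, f t = f ∅ + ∑ t ∈ s.powerset.filter (fun t => t.Nonempty), f t := by
  rw [← Finset.sum_filter_add_sum_filter_not s.powerset (fun t => t.Nonempty) f]
  have : s.powerset.filter (fun t => ¬t.Nonempty) = {∅} := by
    ext t
    simp only [Finset.mem_filter, Finset.mem_powerset, Finset.not_nonempty_iff_eq_empty,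
      Finset.mem_singleton]
    constructor
    · rintro ⟨-, h⟩; exact h
    · rintro rfl; exact ⟨Finset.empty_subset s, rfl⟩
  rw [this, Finset.sum_singleton, add_comm]

end MCoPaper

open MCoPaper

open Classical in
lemma MCo_main [Fintype α] (M : Matroid α)
    (h : ∀ F : Finset (Set α), F.Nonempty →
      (∀ X ∈ F, ∃ G : Finset (Set α), G.Nonempty ∧ (∀ Y ∈ G, CyclicFlat M Y) ∧ X = ⋂₀ ↑G) →
      ∑ F' ∈ F.powerset.filter (fun F' => F'.Nonempty),
          (-1) ^ (F'.card + 1) * (rk M (⋂₀ ↑F') : ℤ) ≤ (rk M (⋃₀ ↑F) : ℤ)) :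
    ∀ F : Finset (Set α), F.Nonempty →
      (∀ X ∈ F, ∃ G : Finset (Set α), G.Nonempty ∧ (∀ Y ∈ G, CyclicFlat M Y) ∧ X = ⋂₀ ↑G) →
      (rk M (⋃₀ ↑F) : ℤ) ≤
        ∑ F' ∈ F.powerset.filter (fun F' => F'.Nonempty),
          (-1) ^ (F'.card + 1) * (rk M (⋂₀ ↑F') : ℤ) := by
  intro F
  induction F using Finset.strongInduction with
  | _ F ih =>
  intro hne hcond
  obtain ⟨A, hA⟩ := hne
  by_cases h0 : F.erase A = ∅
  · -- base case : F = {A}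
    have hFs : F = {A} := by
      apply Finset.eq_singleton_iff_unique_mem.mpr
      refine ⟨hA, fun x hx => ?_⟩
      by_contra hne'
      have : x ∈ F.erase A := Finset.mem_erase.mpr ⟨hne', hx⟩
      rw [h0] at this
      exact Finset.notMem_empty x this
    rw [hFs]
    have hflt : ({A} : Finset (Set α)).powerset.filter (fun t => t.Nonempty) = {{A}} := by
      ext t
      simp only [Finset.mem_filter, Finset.mem_powerset, Finset.mem_singleton]
      constructor
      · rintro ⟨h1, h2⟩
        rcases Finset.subset_singleton_iff.mp h1 with rfl | rfl
        · exact absurd h2 (by simp)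
        · rfl
      · rintro rfl; exact ⟨subset_rfl, Finset.singleton_nonempty A⟩
    rw [hflt, Finset.sum_singleton]
    simp [Set.sUnion_singleton, Set.sInter_singleton]
  · -- inductive step
    set F₀ := F.erase A with hF₀def
    have hAF₀ : A ∉ F₀ := Finset.notMem_erase A F
    have hF : F = insert A F₀ := (Finset.insert_erase hA).symm
    have hF₀ne : F₀.Nonempty := Finset.nonempty_iff_ne_empty.mpr h0
    set f : Set α → Set α := fun X => X ∩ A with hfdef
    set G := F₀.image f with hGdef
    set g : Finset (Set α) → ℤ := fun G' => (rk M (A ∩ ⋂₀ ↑G') : ℤ) with hgdef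
    set u : Finset (Set α) → ℤ :=
      fun F' => (-1 : ℤ) ^ F'.card * (rk M (A ∩ ⋂₀ ↑F') : ℤ) with hudef
    set T := ∑ F' ∈ F₀.powerset.filter (fun t => t.Nonempty), u F' with hTdef
    -- absorption identity
    have habsorb : ∀ F' : Finset (Set α), A ∩ ⋂₀ ↑(F'.image f) = A ∩ ⋂₀ ↑F' := by
      intro F'
      rw [Finset.coe_image, Set.sInter_image, Set.sInter_eq_biInter]
      ext x
      simp only [Set.mem_inter_iff, Set.mem_iInter, hfdef, Finset.mem_coe]
      constructor
      · rintro ⟨h1, h2⟩; exact ⟨h1, fun i hi => (h2 i hi).1⟩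
      · rintro ⟨h1, h2⟩; exact ⟨h1, fun i hi => ⟨h2 i hi, h1⟩⟩
    -- union identity
    have hUG : ⋃₀ ↑G = A ∩ ⋃₀ ↑F₀ := by
      rw [hGdef, Finset.coe_image, Set.sUnion_image]
      ext x
      simp only [Set.mem_iUnion, Set.mem_inter_iff, Set.mem_sUnion, hfdef, Finset.mem_coe]
      tauto
    -- collapse
    have hcol : ∑ F' ∈ F₀.powerset, u F' = ∑ G' ∈ G.powerset, (-1 : ℤ) ^ G'.card * g G' := by
      rw [hGdef, ← collapse_sum f F₀ g]
      apply Finset.sum_congr rfl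
      intro F' _
      rw [hudef, hgdef]
      simp only [habsorb F']
    have hu0 : u ∅ = (rk M A : ℤ) := by
      rw [hudef]; simp
    have hg0 : g ∅ = (rk M A : ℤ) := by
      rw [hgdef]; simp
    have hT : ∑ G' ∈ G.powerset.filter (fun t => t.Nonempty), (-1 : ℤ) ^ G'.card * g G' = T := by
      have e1 := split_empty F₀ u
      have e2 := split_empty G (fun G' => (-1 : ℤ) ^ G'.card * g G')
      rw [hcol] at e1
      rw [e2] at e1
      simp only [Finset.card_empty, pow_zero, one_mul, hg0] at e1
      rw [hu0] at e1
      rw [hTdef]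
      linarith
    -- g on nonempty subsets of G is plain rank
    have hgG : ∀ G' ∈ G.powerset.filter (fun t : Finset (Set α) => t.Nonempty),
        g G' = (rk M (⋂₀ ↑G') : ℤ) := by
      intro G' hG'
      rw [Finset.mem_filter, Finset.mem_powerset] at hG'
      obtain ⟨Y, hY⟩ := hG'.2
      obtain ⟨X, hX, rfl⟩ := Finset.mem_image.mp (hG'.1 hY)
      have hsub : ⋂₀ (↑G' : Set (Set α)) ⊆ A := by
        refine (Set.sInter_subset_of_mem (Finset.mem_coe.mpr hY)).trans ?_
        rw [hfdef]
        exact Set.inter_subset_right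
      rw [hgdef]
      simp only [Set.inter_eq_self_of_subset_right hsub]
    -- the inequality from h applied to G, rewritten
    have hG_ne : G.Nonempty := hF₀ne.image f
    have hcondG : ∀ Y ∈ G, ∃ Gm : Finset (Set α), Gm.Nonempty ∧
        (∀ Z ∈ Gm, CyclicFlat M Z) ∧ Y = ⋂₀ ↑Gm := by
      intro Y hY
      obtain ⟨X, hX, rfl⟩ := Finset.mem_image.mp hY
      obtain ⟨GX, hGXne, hGXcf, hXeq⟩ := hcond X (Finset.mem_of_mem_erase hX)
      obtain ⟨GA, hGAne, hGAcf, hAeq⟩ := hcond A hA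
      refine ⟨GX ∪ GA, ?_, fun Z hZ => ?_, ?_⟩
      · obtain ⟨z, hz⟩ := hGXne
        exact ⟨z, Finset.mem_union_left _ hz⟩
      · rcases Finset.mem_union.mp hZ with h' | h'
        · exact hGXcf Z h'
        · exact hGAcf Z h'
      · rw [hfdef, Finset.coe_union, Set.sInter_union, ← hXeq, ← hAeq]
    have hhG := h G hG_ne hcondG
    -- IE(G) = -T
    have hIEG : ∑ G' ∈ G.powerset.filter (fun t => t.Nonempty),
        (-1 : ℤ) ^ (G'.card + 1) * (rk M (⋂₀ ↑G') : ℤ) = -T := by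
      rw [← hT, ← Finset.sum_neg_distrib]
      apply Finset.sum_congr rfl
      intro G' hG'
      rw [← hgG G' hG', pow_succ]
      ring
    have hhG2 : -T ≤ (rk M (A ∩ ⋃₀ ↑F₀) : ℤ) := by
      rw [← hUG, ← hIEG]
      exact hhG
    -- IE(F) decomposition
    set q : Finset (Set α) → ℤ :=
      fun F' => if F'.Nonempty then (-1 : ℤ) ^ (F'.card + 1) * (rk M (⋂₀ ↑F') : ℤ) else 0
      with hqdef
    have hq2 : ∀ F' ∈ F₀.powerset, q (insert A F') = u F' := by
      intro F' hF'
      have hA' : A ∉ F' := fun hc => hAF₀ (Finset.mem_powerset.mp hF' hc)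
      have hcard : (insert A F').card = F'.card + 1 := Finset.card_insert_of_notMem hA'
      rw [hqdef, hudef]
      simp only [Finset.insert_nonempty, if_true, hcard, Finset.coe_insert,
        Set.sInter_insert, pow_succ]
      ring
    have hIEF : ∑ F' ∈ F.powerset.filter (fun t => t.Nonempty),
          (-1 : ℤ) ^ (F'.card + 1) * (rk M (⋂₀ ↑F') : ℤ)
        = (∑ F' ∈ F₀.powerset.filter (fun t => t.Nonempty),
            (-1 : ℤ) ^ (F'.card + 1) * (rk M (⋂₀ ↑F') : ℤ)) + (rk M A : ℤ) + T := by
      have e1 : ∑ F' ∈ F.powerset.filter (fun t => t.Nonempty),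
          (-1 : ℤ) ^ (F'.card + 1) * (rk M (⋂₀ ↑F') : ℤ) = ∑ F' ∈ F.powerset, q F' := by
        rw [hqdef, Finset.sum_filter]
      have e2 : ∑ F' ∈ F₀.powerset.filter (fun t => t.Nonempty),
          (-1 : ℤ) ^ (F'.card + 1) * (rk M (⋂₀ ↑F') : ℤ) = ∑ F' ∈ F₀.powerset, q F' := by
        rw [hqdef, Finset.sum_filter]
      have e3 : ∑ F' ∈ F.powerset, q F'
          = ∑ F' ∈ F₀.powerset, q F' + ∑ F' ∈ F₀.powerset, q (insert A F') := by
        rw [hF]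
        exact Finset.sum_powerset_insert hAF₀ q
      have e4 : ∑ F' ∈ F₀.powerset, q (insert A F') = ∑ F' ∈ F₀.powerset, u F' :=
        Finset.sum_congr rfl hq2
      have e5 := split_empty F₀ u
      rw [e1, e2, e3, e4, e5, hu0, ← hTdef]
      ring
    -- submodularity
    have hsubZ : (rk M (A ∩ ⋃₀ ↑F₀) : ℤ) + (rk M (A ∪ ⋃₀ ↑F₀) : ℤ)
        ≤ (rk M A : ℤ) + (rk M (⋃₀ ↑F₀) : ℤ) := by
      exact_mod_cast rk_submod M A (⋃₀ ↑F₀)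
    -- induction hypothesis
    have hih := ih F₀ (Finset.erase_ssubset hA) hF₀ne
      (fun X hX => hcond X (Finset.mem_of_mem_erase hX))
    -- conclude
    have hL : ⋃₀ (↑F : Set (Set α)) = A ∪ ⋃₀ ↑F₀ := by
      rw [hF, Finset.coe_insert, Set.sUnion_insert]
    rw [hL, hIEF]
    linarith


open Classical in
theorem stmt17 [Fintype α] (M : Matroid α)
    (h : ∀ F : Finset (Set α), F.Nonempty →
      (∀ X ∈ F, ∃ G : Finset (Set α), G.Nonempty ∧ (∀ Y ∈ G, CyclicFlat M Y) ∧ X = ⋂₀ ↑G) →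
      ∑ F' ∈ F.powerset.filter (fun F' => F'.Nonempty),
          (-1) ^ (F'.card + 1) * (rk M (⋂₀ ↑F') : ℤ) ≤ (rk M (⋃₀ ↑F) : ℤ)) :
    ∀ F : Finset (Set α), F.Nonempty →
      (∀ X ∈ F, ∃ G : Finset (Set α), G.Nonempty ∧ (∀ Y ∈ G, CyclicFlat M Y) ∧ X = ⋂₀ ↑G) →
      (rk M (⋃₀ ↑F) : ℤ) =
        ∑ F' ∈ F.powerset.filter (fun F' => F'.Nonempty),
          (-1) ^ (F'.card + 1) * (rk M (⋂₀ ↑F') : ℤ) := by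
  intro F hne hcond
  exact le_antisymm (MCo_main M h F hne hcond) (h F hne hcond)
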